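/- arXiv:1203.1482 — 5 statements merged into one kernel-verified Lean document; each statement's English description precedes it below -/
import Mathlib

section
/- Let n ≥ 1, let f_0,…,f_n be a non-negative, log-concave sequence without internal zeros which is not identically zero, and put m = ⌊n/2⌋. Suppose M_0, M_1, …, M_m are real numbers with M_m > 0 and Σ_{k=0}^m M_k ≥ 0, and suppose the sequence M_0,…,M_m has at most one change of sign in the following sense: there exists an index t with 0 ≤ t ≤ m such that M_k ≤ 0 for all k < t and M_k ≥ 0 for all k ≥ t. Then Σ_{k=0}^m f_k f_{n−k} M_k ≥ 0. -/
theorem key_sum_nonneg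
    (n : ℕ) (hn : 1 ≤ n) (f : ℕ → ℝ)
    (hpos : ∀ k, k ≤ n → 0 ≤ f k)
    (hlc : ∀ k, 1 ≤ k → k ≤ n - 1 → f (k - 1) * f (k + 1) ≤ f k ^ 2)
    (hniz : ∀ i j k, i ≤ k → k ≤ j → j ≤ n → 0 < f i → 0 < f j → 0 < f k)
    (hnz : ∃ k, k ≤ n ∧ f k ≠ 0)
    (M : ℕ → ℝ)
    (hMlast : 0 < M (n / 2))
    (hMsum : 0 ≤ ∑ k ∈ Finset.range (n / 2 + 1), M k)
    (hsign : ∃ t, t ≤ n / 2 ∧ ∀ k, k ≤ n / 2 →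
      (k < t → M k ≤ 0) ∧ (t ≤ k → 0 ≤ M k)) :
    0 ≤ ∑ k ∈ Finset.range (n / 2 + 1), f k * f (n - k) * M k := by
  obtain ⟨t, ht, hSign⟩ := hsign
  set g : ℕ → ℝ := fun k => f k * f (n - k) with hg
  have gnonneg : ∀ k, k ≤ n / 2 → 0 ≤ g k := by
    intro k hk
    exact mul_nonneg (hpos k (by omega)) (hpos (n - k) (by omega))
  -- one step of monotonicity
  have gstep : ∀ k, 2 * (k + 1) ≤ n → g k ≤ g (k + 1) := by
    intro k hk
    simp only [hg]
    by_cases h0 : f k = 0 ∨ f (n - k) = 0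
    · have : f k * f (n - k) = 0 := by rcases h0 with h | h <;> rw [h] <;> ring
      rw [this]
      exact mul_nonneg (hpos (k+1) (by omega)) (hpos (n - (k+1)) (by omega))
    · push_neg at h0
      have hk0 : 0 < f k := lt_of_le_of_ne (hpos k (by omega)) (Ne.symm h0.1)
      have hnk0 : 0 < f (n - k) := lt_of_le_of_ne (hpos (n-k) (by omega)) (Ne.symm h0.2)
      have hposz : ∀ l, k ≤ l → l ≤ n - k → 0 < f l := by
        intro l h1 h2
        exact hniz k (n - k) l h1 h2 (by omega) hk0 hnk0
      -- P d : f k * f (k+1+d+1) ≤ f (k+1) * f (k+1+d), for k+1+d ≤ n-k-1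
      have P : ∀ d, k + 1 + d ≤ n - k - 1 →
          f k * f (k + 1 + d + 1) ≤ f (k + 1) * f (k + 1 + d) := by
        intro d
        induction d with
        | zero =>
          intro hd
          have := hlc (k + 1) (by omega) (by omega)
          simpa [pow_two] using this
        | succ d ih =>
          intro hd
          have hd' : k + 1 + d ≤ n - k - 1 := by omega
          have hP := ih hd'
          set j := k + 1 + d with hj
          have hlcj : f j * f (j + 2) ≤ f (j + 1) ^ 2 := by
            have h := hlc (j + 1) (by omega) (by omega)
            have e : j + 1 - 1 = j := by omega
            rw [e] at h
            exact h
          have hjpos : 0 < f j := hposz j (by omega) (by omega)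
          have hj1pos : 0 < f (j + 1) := hposz (j + 1) (by omega) (by omega)
          have goal : f k * f (j + 2) ≤ f (k + 1) * f (j + 1) := by
            have hkpos := hk0.le
            have hk1pos : 0 ≤ f (k + 1) := hposz (k + 1) (by omega) (by omega) |>.le
            nlinarith [mul_pos hjpos hj1pos, mul_nonneg hkpos (hposz (j+2) (by omega) (by omega)).le]
          have e1 : k + 1 + (d + 1) + 1 = j + 2 := by omega
          have e2 : k + 1 + (d + 1) = j + 1 := by omega
          rw [e1, e2]
          exact goal
      have hfin := P (n - 2 * k - 2) (by omega)
      have e1 : k + 1 + (n - 2 * k - 2) + 1 = n - k := by omega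
      have e2 : k + 1 + (n - 2 * k - 2) = n - (k + 1) := by omega
      rw [e1, e2] at hfin
      exact hfin
  -- full monotonicity on [0, n/2]
  have gmono : ∀ a b, a ≤ b → b ≤ n / 2 → g a ≤ g b := by
    intro a b hab hb
    induction b with
    | zero => simp [Nat.le_zero.mp hab]
    | succ b ih =>
      rcases Nat.lt_or_ge a (b + 1) with h | h
      · have h1 : g a ≤ g b := ih (by omega) (by omega)
        have h2 : g b ≤ g (b + 1) := gstep b (by omega)
        linarith
      · have : a = b + 1 := by omega
        simp [this]
  have hsplit : ∑ k ∈ Finset.range (n / 2 + 1), f k * f (n - k) * M k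
      = (∑ k ∈ Finset.range (n / 2 + 1), (g k - g t) * M k)
        + g t * ∑ k ∈ Finset.range (n / 2 + 1), M k := by
    rw [Finset.mul_sum, ← Finset.sum_add_distrib]
    exact Finset.sum_congr rfl (fun k _ => by simp [hg]; ring)
  have h1 : 0 ≤ ∑ k ∈ Finset.range (n / 2 + 1), (g k - g t) * M k := by
    apply Finset.sum_nonneg
    intro k hk
    rw [Finset.mem_range] at hk
    have hk' : k ≤ n / 2 := by omega
    rcases Nat.lt_or_ge k t with h | h
    · have hM : M k ≤ 0 := (hSign k hk').1 h
      have hgle : g k ≤ g t := gmono k t (by omega) ht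
      have := mul_nonneg (neg_nonneg.mpr (by linarith : g k - g t ≤ 0)) (neg_nonneg.mpr hM)
      nlinarith [this]
    · have hM : 0 ≤ M k := (hSign k hk').2 h
      have hgle : g t ≤ g k := gmono t k h hk'
      exact mul_nonneg (by linarith) hM
  have h2 : 0 ≤ g t * ∑ k ∈ Finset.range (n / 2 + 1), M k :=
    mul_nonneg (gnonneg t ht) hMsum
  rw [hsplit]
  linarith
end

section
/- Let q ≥ 1, let a_2,…,a_q be positive real numbers, and let 0 < s ≤ t be reals. Then for every k = 1,2,…,q, e_k(s, a_2,…,a_q) · e_{k−1}(t, a_2,…,a_q) ≤ e_k(t, a_2,…,a_q) · e_{k−1}(s, a_2,…,a_q); that is, the ratio e_k/e_{k−1} of elementary symmetric polynomials in positive variables is increasing in each variable. -/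
/-- The `k`-th elementary symmetric polynomial of the values of `a : Fin q → ℝ`. -/
noncomputable def esymm {q : ℕ} (a : Fin q → ℝ) (k : ℕ) : ℝ :=
  ∑ s ∈ Finset.powersetCard k (Finset.univ : Finset (Fin q)), ∏ i ∈ s, a i

namespace EsymAux

noncomputable def E {α : Type*} [DecidableEq α] (b : α → ℝ) (T : Finset α) (k : ℕ) : ℝ :=
  ∑ S ∈ T.powersetCard k, ∏ i ∈ S, b i

lemma E_zero {α : Type*} [DecidableEq α] (b : α → ℝ) (T : Finset α) : E b T 0 = 1 := by
  simp [E]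

lemma E_empty {α : Type*} [DecidableEq α] (b : α → ℝ) (k : ℕ) :
    E b (∅ : Finset α) (k + 1) = 0 := by
  rw [E, Finset.powersetCard_eq_empty.mpr (by simp)]
  simp

lemma E_insert {α : Type*} [DecidableEq α] (b : α → ℝ) {T : Finset α} {i : α} (hi : i ∉ T)
    (k : ℕ) : E b (insert i T) (k + 1) = E b T (k + 1) + b i * E b T k := by
  rw [E, Finset.powersetCard_succ_insert hi, Finset.sum_union, Finset.sum_image]
  · rw [E, E, Finset.mul_sum]
    congr 1
    refine Finset.sum_congr rfl fun S hS => ?_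
    rw [Finset.mem_powersetCard] at hS
    have hiS : i ∉ S := fun h => hi (hS.1 h)
    rw [Finset.prod_insert hiS]
  · intro S1 h1 S2 h2 h
    rw [Finset.mem_coe, Finset.mem_powersetCard] at h1 h2
    have hi1 : i ∉ S1 := fun h' => hi (h1.1 h')
    have hi2 : i ∉ S2 := fun h' => hi (h2.1 h')
    have := congrArg (Finset.erase · i) h
    simpa [Finset.erase_insert hi1, Finset.erase_insert hi2] using this
  · rw [Finset.disjoint_left]
    intro S hS hS'
    rw [Finset.mem_powersetCard] at hS
    obtain ⟨S', hS', rfl⟩ := Finset.mem_image.mp hS'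
    exact hi (hS.1 (Finset.mem_insert_self i S'))

lemma E_congr {α : Type*} [DecidableEq α] {b c : α → ℝ} {T : Finset α}
    (h : ∀ i ∈ T, b i = c i) (k : ℕ) : E b T k = E c T k := by
  refine Finset.sum_congr rfl fun S hS => Finset.prod_congr rfl fun i hi => ?_
  rw [Finset.mem_powersetCard] at hS
  exact h i (hS.1 hi)

lemma E_nonneg {α : Type*} [DecidableEq α] {b : α → ℝ} {T : Finset α}
    (hb : ∀ i ∈ T, 0 ≤ b i) (k : ℕ) : 0 ≤ E b T k := by
  refine Finset.sum_nonneg fun S hS => Finset.prod_nonneg fun i hi => ?_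
  rw [Finset.mem_powersetCard] at hS
  exact hb i (hS.1 hi)

lemma E_zero_succ {α : Type*} [DecidableEq α] {b : α → ℝ} (T : Finset α) :
    (∀ i ∈ T, 0 < b i) → ∀ k, E b T k = 0 → E b T (k + 1) = 0 := by
  induction T using Finset.induction_on with
  | empty => intro _ k _; exact E_empty b k
  | @insert i T hi ih =>
    intro hb k hk
    have hbT : ∀ j ∈ T, 0 < b j := fun j hj => hb j (Finset.mem_insert_of_mem hj)
    have hbi : 0 < b i := hb i (Finset.mem_insert_self i T)
    match k with
    | 0 => rw [E_zero] at hk; norm_num at hk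
    | Nat.succ j =>
      rw [E_insert b hi] at hk
      have h1 : 0 ≤ E b T (j + 1) := E_nonneg (fun x hx => (hbT x hx).le) _
      have h2 : 0 ≤ E b T j := E_nonneg (fun x hx => (hbT x hx).le) _
      have hE1 : E b T (j + 1) = 0 := by nlinarith
      have hE0 : E b T j = 0 := by nlinarith
      rw [E_insert b hi, ih hbT (j + 1) hE1, hE1]
      ring

lemma newton {α : Type*} [DecidableEq α] {b : α → ℝ} (T : Finset α) :
    (∀ i ∈ T, 0 < b i) → ∀ m, E b T (m + 2) * E b T m ≤ E b T (m + 1) ^ 2 := by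
  induction T using Finset.induction_on with
  | empty =>
    intro _ m
    rw [E_empty, E_empty]
    simp
  | @insert i T hi ih =>
    intro hb m
    have hbT : ∀ j ∈ T, 0 < b j := fun j hj => hb j (Finset.mem_insert_of_mem hj)
    have hbi : 0 < b i := hb i (Finset.mem_insert_self i T)
    have hnn : ∀ k, 0 ≤ E b T k := fun k => E_nonneg (fun x hx => (hbT x hx).le) k
    match m with
    | 0 =>
      rw [E_zero, show (0:ℕ)+2 = 1+1 from rfl, E_insert b hi, E_insert b hi, E_zero]
      have ih0 := ih hbT 0
      rw [E_zero] at ih0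
      nlinarith [hnn 1, hnn 2]
    | Nat.succ n =>
      set A := E b T (n + 3) with hA
      set B := E b T (n + 2) with hB
      set C := E b T (n + 1) with hC
      set D := E b T n with hD
      have h1 : A * C ≤ B ^ 2 := ih hbT (n + 1)
      have h2 : B * D ≤ C ^ 2 := ih hbT n
      have hnA : 0 ≤ A := hnn _
      have hnB : 0 ≤ B := hnn _
      have hnC : 0 ≤ C := hnn _
      have hnD : 0 ≤ D := hnn _
      have key : A * D ≤ B * C := by
        rcases eq_or_lt_of_le hnC with hC0 | hC0
        · have hB0 : B = 0 := E_zero_succ T hbT (n + 1) hC0.symm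
          have hA0 : A = 0 := E_zero_succ T hbT (n + 2) hB0
          rw [hA0, hB0]; simp
        rcases eq_or_lt_of_le hnB with hB0 | hB0
        · have hA0 : A = 0 := E_zero_succ T hbT (n + 2) hB0.symm
          rw [hA0]
          simpa using mul_nonneg hnB hnC
        · have hBC : 0 < B * C := mul_pos hB0 hC0
          nlinarith [mul_le_mul h1 h2 (by nlinarith) (sq_nonneg B)]
      rw [show n + 1 + 2 = (n + 2) + 1 from rfl, E_insert b hi (n + 2),
        E_insert b hi (n + 1), E_insert b hi n]
      simp only [show n + 2 + 1 = n + 3 from by omega, show n + 1 + 1 = n + 2 from by omega,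
        ← hA, ← hB, ← hC, ← hD]
      nlinarith [mul_nonneg hbi.le (sub_nonneg.mpr key),
        mul_nonneg (mul_nonneg hbi.le hbi.le) (sub_nonneg.mpr h2)]

end EsymAux

theorem esymm_ratio_monotone_in_each_variable
    (q : ℕ) (hq : 1 ≤ q) (a : Fin q → ℝ)
    (ha_pos : ∀ i, i ≠ ⟨0, hq⟩ → 0 < a i)
    (s t : ℝ) (hs : 0 < s) (hst : s ≤ t) :
    ∀ k, 1 ≤ k → k ≤ q →
      esymm (Function.update a ⟨0, hq⟩ s) k * esymm (Function.update a ⟨0, hq⟩ t) (k - 1) ≤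
        esymm (Function.update a ⟨0, hq⟩ t) k * esymm (Function.update a ⟨0, hq⟩ s) (k - 1) := by
  open EsymAux in
  intro k hk1 hkq
  set i0 : Fin q := ⟨0, hq⟩ with hi0
  set T : Finset (Fin q) := Finset.univ.erase i0 with hT
  have hiT : i0 ∉ T := Finset.notMem_erase i0 Finset.univ
  have huniv : insert i0 T = Finset.univ := Finset.insert_erase (Finset.mem_univ i0)
  have hbT : ∀ i ∈ T, 0 < a i := fun i hi => ha_pos i (Finset.ne_of_mem_erase hi)
  have hupd : ∀ (x : ℝ) (j : ℕ), esymm (Function.update a i0 x) (j + 1)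
      = E a T (j + 1) + x * E a T j := by
    intro x j
    have h1 : esymm (Function.update a i0 x) (j + 1) = E (Function.update a i0 x) (insert i0 T) (j + 1) := by
      rw [huniv]; rfl
    rw [h1, E_insert _ hiT, Function.update_self]
    have hc : ∀ i ∈ T, Function.update a i0 x i = a i := by
      intro i hi
      exact Function.update_of_ne (Finset.ne_of_mem_erase hi) _ _
    rw [E_congr hc, E_congr hc]
  have hnn : ∀ k, 0 ≤ E a T k := fun k => E_nonneg (fun x hx => (hbT x hx).le) k
  match k, hk1 with
  | 1, _ =>
    simp only [Nat.sub_self]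
    have h0 : ∀ x : ℝ, esymm (Function.update a i0 x) 0 = 1 := by
      intro x; simp [esymm]
    rw [h0, h0, hupd s 0, hupd t 0, E_zero]
    nlinarith [hnn 1]
  | Nat.succ (Nat.succ n), _ =>
    have hk1' : Nat.succ (Nat.succ n) - 1 = n + 1 := rfl
    rw [hk1', hupd s (n + 1), hupd t (n + 1), hupd s n, hupd t n]
    have hnewton := newton T hbT n
    set A := E a T (n + 2)
    set B := E a T (n + 1)
    set C := E a T n
    nlinarith [hnn n, hnn (n + 1), hnn (n + 2), mul_nonneg (hnn (n+1)) (hnn (n+1)),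
      mul_nonneg (sub_nonneg.mpr hst) (sub_nonneg.mpr hnewton)]
end

section
/- Let n ≥ 2 and let f_0,…,f_n be non-negative reals satisfying the strict log-concavity condition f_k² > f_{k−1} f_{k+1} for all k = 1,2,…,n−1. Then the polynomial P_n(x) has degree exactly n−2, and all of its coefficients at x^j for j = 0,1,…,n−2 are positive. -/
open Polynomial

/-- The polynomial `P_n(x) = Σ_{k=0}^n f_k f_{n-k} C(n,k) [(x)_k (x)_{n-k} - (x+1)_k (x-1)_{n-k}]`,
where `(x)_k` is the rising factorial. -/
noncomputable def Ppoly (n : ℕ) (f : ℕ → ℝ) : Polynomial ℝ :=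
  ∑ k ∈ Finset.range (n + 1),
    C (f k * f (n - k) * (n.choose k : ℝ)) *
      (ascPochhammer ℝ k * ascPochhammer ℝ (n - k) -
        (ascPochhammer ℝ k).comp (X + 1) * (ascPochhammer ℝ (n - k)).comp (X - 1))

/-! ### Auxiliary shifted rising factorials -/

/-- `A a m` is the shifted rising factorial `(x+a)(x+a+1)⋯(x+a+m-1)`. -/
noncomputable def A (a : ℝ) (m : ℕ) : Polynomial ℝ := (ascPochhammer ℝ m).comp (X + C a)

lemma A_zero (a : ℝ) : A a 0 = 1 := by simp [A]

lemma A_succ_right (a : ℝ) (m : ℕ) : A a (m + 1) = A a m * (X + C (a + m)) := by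
  simp only [A, ascPochhammer_succ_right, mul_comp, add_comp, X_comp, natCast_comp,
    map_add, C_eq_natCast]
  ring

lemma A_succ_left (a : ℝ) (m : ℕ) : A a (m + 1) = (X + C a) * A (a + 1) m := by
  simp only [A, ascPochhammer_succ_left, mul_comp, X_comp, comp_assoc, add_comp, one_comp,
    map_add, C_1]
  ring_nf

lemma A_add (a : ℝ) (m l : ℕ) : A a (m + l) = A a m * A (a + m) l := by
  induction l with
  | zero => simp [A_zero]
  | succ l ih =>
      rw [← add_assoc, A_succ_right, ih, A_succ_right, mul_assoc]
      push_cast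
      ring_nf

lemma A_one' (a : ℝ) : A a 1 = X + C a := by
  rw [show (1:ℕ) = 0 + 1 by rfl, A_succ_right, A_zero]; simp

lemma A0_succ (m : ℕ) : A 0 (m + 1) = X * A 1 m := by
  rw [A_succ_left]; norm_num

lemma Am1_succ (m : ℕ) : A (-1) (m + 1) = (X - 1) * A 0 m := by
  rw [A_succ_left]; norm_num [sub_eq_add_neg]

lemma A_zero_shift (m : ℕ) : A 0 m = ascPochhammer ℝ m := by
  simp [A]

lemma A_one_shift (m : ℕ) : A 1 m = (ascPochhammer ℝ m).comp (X + 1) := by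
  simp [A]

lemma A_negone_shift (m : ℕ) : A (-1) m = (ascPochhammer ℝ m).comp (X - 1) := by
  simp [A, map_neg, sub_eq_add_neg]

/-! ### Coefficient positivity and degree bounds for `A` -/

lemma coeff_mul_nonneg {p q : Polynomial ℝ} (hp : ∀ j, 0 ≤ p.coeff j)
    (hq : ∀ j, 0 ≤ q.coeff j) (j : ℕ) : 0 ≤ (p * q).coeff j := by
  rw [coeff_mul]
  exact Finset.sum_nonneg fun x _ => mul_nonneg (hp _) (hq _)

lemma coeff_X_add_C_nonneg {a : ℝ} (ha : 0 ≤ a) (j : ℕ) : 0 ≤ (X + C a).coeff j := by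
  rcases j with _ | _ | j <;> simp [coeff_X, coeff_C, ha]

lemma A_coeff_nonneg {a : ℝ} (ha : 0 ≤ a) (m : ℕ) : ∀ j, 0 ≤ (A a m).coeff j := by
  induction m with
  | zero => intro j; rw [A_zero]; simp [coeff_one]; split <;> norm_num
  | succ m ih =>
      intro j
      rw [A_succ_right]
      exact coeff_mul_nonneg ih (coeff_X_add_C_nonneg (by positivity)) j

lemma A_one_coeff_pos (m : ℕ) : ∀ j, j ≤ m → 0 < (A 1 m).coeff j := by
  induction m with
  | zero => intro j hj; interval_cases j; simp [A_zero]
  | succ m ih =>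
      intro j hj
      rw [A_succ_right]
      have hsplit : (A 1 m * (X + C (1 + (m:ℝ)))).coeff j
          = (A 1 m * X).coeff j + (1 + (m:ℝ)) * (A 1 m).coeff j := by
        rw [mul_add, coeff_add, coeff_mul_C]
        ring
      rw [hsplit]
      rcases j with _ | j
      · have h0 : (A 1 m * X).coeff 0 = 0 := by
          rw [mul_coeff_zero, coeff_X_zero, mul_zero]
        rw [h0, zero_add]
        have := ih 0 (Nat.zero_le m)
        positivity
      · rw [coeff_mul_X]
        have h1 : 0 < (A 1 m).coeff j := ih j (by omega)
        have h2 : 0 ≤ (A 1 m).coeff (j+1) := A_coeff_nonneg (by norm_num) m (j+1)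
        have : (0:ℝ) < 1 + m := by positivity
        nlinarith

lemma A_degree_le (a : ℝ) (m : ℕ) : (A a m).degree ≤ m := by
  induction m with
  | zero => rw [A_zero]; exact degree_one_le.trans (by exact_mod_cast Nat.cast_nonneg' 0)
  | succ m ih =>
      rw [A_succ_right]
      refine (degree_mul_le _ _).trans ?_
      calc (A a m).degree + (X + C (a + (m:ℝ))).degree ≤ (m : WithBot ℕ) + 1 := by
            exact add_le_add ih (le_of_eq (degree_X_add_C _))
        _ = ((m+1 : ℕ) : WithBot ℕ) := by push_cast; rfl

/-! ### The telescoping family `T` -/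

/-- `Tp n k = -k C(n,k) (x)_k (x+1)_{n-1-k}` (with the appropriate value at `k = n`,
and `0` for `k = 0` or `k > n`). -/
noncomputable def Tp (n k : ℕ) : Polynomial ℝ :=
  if k = 0 ∨ n < k then 0
  else if k = n then -(C (n : ℝ)) * A 1 (n - 1)
  else -(C ((k * n.choose k : ℕ) : ℝ)) * (A 0 k * A 1 (n - 1 - k))

lemma Tp_zero (n : ℕ) : Tp n 0 = 0 := by simp [Tp]

lemma Tp_top {n k : ℕ} (h : n < k) : Tp n k = 0 := by simp [Tp, h]

lemma Tp_self {n : ℕ} (hn : 1 ≤ n) : Tp n n = -(C (n : ℝ)) * A 1 (n - 1) := by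
  rw [Tp, if_neg (by omega), if_pos rfl]

lemma Tp_gen {n k : ℕ} (h1 : 1 ≤ k) (h2 : k + 1 ≤ n) :
    Tp n k = -(C ((k * n.choose k : ℕ) : ℝ)) * (A 0 k * A 1 (n - 1 - k)) := by
  rw [Tp, if_neg (by omega), if_neg (by omega)]

lemma X_mul_A_one (k : ℕ) : X * A 1 k = A 0 k * (X + (k : Polynomial ℝ)) := by
  have h2 := A_succ_right 0 k
  rw [A_succ_left 0 k] at h2
  simp only [map_zero, zero_add, add_zero, C_eq_natCast] at h2
  exact h2

/-- The fundamental telescoping identity. -/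
lemma Rtel (n : ℕ) (hn : 2 ≤ n) (k : ℕ) (hk : k ≤ n) :
    C ((n.choose k : ℝ)) * (A 0 k * A 0 (n - k) - A 1 k * A (-1) (n - k)) =
      Tp n k - Tp n (k + 1) := by
  rcases eq_or_ne k 0 with rfl | hk0
  · obtain ⟨m, rfl⟩ : ∃ m, n = m + 2 := ⟨n - 2, by omega⟩
    rw [Tp_zero, Tp_gen (by omega) (by omega)]
    simp only [zero_add, Nat.choose_zero_right, Nat.choose_one_right, A_zero, Nat.sub_zero,
      one_mul]
    rw [show m + 2 - 1 - 1 = m by omega]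
    rw [show m + 2 = (m + 1) + 1 from rfl, A0_succ (m+1), Am1_succ (m+1),
      A_succ_right 1 m, A0_succ m, A_one']
    simp only [C_eq_natCast, map_add, map_neg, map_one, map_zero]
    push_cast
    ring
  · rcases eq_or_ne k n with hkn | hkn
    · subst hkn
      obtain ⟨m, rfl⟩ : ∃ m, k = m + 1 := ⟨k - 1, by omega⟩
      rw [Tp_self (by omega), Tp_top (by omega)]
      simp only [Nat.choose_self, Nat.sub_self, A_zero, Nat.add_sub_cancel]
      rw [A0_succ m, A_succ_right 1 m]
      simp only [C_eq_natCast, map_add, map_one, map_zero]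
      push_cast
      ring
    · rcases eq_or_ne k (n - 1) with rfl | hkn1
      · obtain ⟨m, rfl⟩ : ∃ m, n = m + 2 := ⟨n - 2, by omega⟩
        rw [show m + 2 - 1 = m + 1 from rfl]
        rw [Tp_gen (by omega) (by omega), show m + 1 + 1 = m + 2 from rfl, Tp_self (by omega)]
        rw [show m + 2 - (m + 1) = 1 by omega, show m + 2 - 1 - (m + 1) = 0 by omega,
          show m + 2 - 1 = m + 1 from rfl]
        rw [Nat.choose_succ_self_right, A_zero, A_one', A_one', A_succ_right 1 m, A0_succ m]
        simp only [C_eq_natCast, map_add, map_neg, map_one, map_zero]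
        push_cast
        ring
      · obtain ⟨m, hm⟩ : ∃ m, n = k + m + 2 := ⟨n - k - 2, by omega⟩
        subst hm
        rw [Tp_gen (by omega) (by omega), Tp_gen (by omega) (by omega)]
        rw [show k + m + 2 - k = m + 2 by omega, show k + m + 2 - 1 - k = m + 1 by omega,
          show k + m + 2 - 1 - (k + 1) = m by omega]
        have hch : ((k : Polynomial ℝ) + 1) * (((k + m + 2).choose (k+1) : ℕ) : Polynomial ℝ) =
            (((k + m + 2).choose k : ℕ) : Polynomial ℝ) * ((m : Polynomial ℝ) + 2) := by
          have h := Nat.choose_succ_right_eq (k + m + 2) k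
          rw [show k + m + 2 - k = m + 2 by omega] at h
          have h2 : ((k+1) * (k + m + 2).choose (k+1) : ℕ) =
              ((k + m + 2).choose k * (m + 2) : ℕ) := by
            rw [Nat.mul_comm]; exact h
          exact_mod_cast h2
        have hX := X_mul_A_one k
        rw [show m + 2 = (m + 1) + 1 from rfl, A0_succ (m+1), Am1_succ (m+1),
          A_succ_right 1 m, A0_succ m, A_succ_right 0 k]
        simp only [C_eq_natCast, map_add, map_neg, map_one, map_zero]
        push_cast
        linear_combination (-(((k + m + 2).choose k : ℕ) : Polynomial ℝ) * (X - 1) * A 1 m) * hX +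
          (-(A 0 k * (X + (k : Polynomial ℝ)) * A 1 m)) * hch

/-! ### Closed forms for `Tp n k - Tp n (n+1-k)` -/

lemma U_one {n : ℕ} (hn : 2 ≤ n) :
    Tp n 1 - Tp n n = C ((n * (n - 1) : ℕ) : ℝ) * A 1 (n - 2) := by
  obtain ⟨m, rfl⟩ : ∃ m, n = m + 2 := ⟨n - 2, by omega⟩
  rw [Tp_gen (by omega) (by omega), Tp_self (by omega)]
  rw [show m + 2 - 1 - 1 = m by omega, show m + 2 - 1 = m + 1 from rfl,
    show m + 2 - 2 = m by omega]
  rw [A_succ_right 1 m, A_one' 0]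
  simp only [one_mul, Nat.choose_one_right, C_eq_natCast, map_add, map_zero, map_one]
  push_cast
  ring

lemma U_mid {n k : ℕ} (h : 2 * k = n + 1) : Tp n k - Tp n (n + 1 - k) = 0 := by
  rw [show n + 1 - k = k by omega, sub_self]

lemma U_gen {n k : ℕ} (h2 : 2 ≤ k) (hk : 2 * k ≤ n) :
    Tp n k - Tp n (n + 1 - k) =
      C ((k * (n + 1 - 2 * k) * n.choose k : ℕ) : ℝ) *
        (A 0 k * (A 1 (k - 2) * A k (n - 2 * k))) := by
  obtain ⟨j, rfl⟩ : ∃ j, k = j + 2 := ⟨k - 2, by omega⟩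
  obtain ⟨m, rfl⟩ : ∃ m, n = 2 * (j + 2) + m := ⟨n - 2 * (j + 2), by omega⟩
  rw [show 2 * (j + 2) + m + 1 - (j + 2) = (j + 2) + (m + 1) by omega]
  rw [Tp_gen (by omega) (by omega), Tp_gen (by omega) (by omega)]
  rw [show 2 * (j + 2) + m - 1 - (j + 2) = j + (m + 1) by omega,
    show 2 * (j + 2) + m - 1 - ((j + 2) + (m + 1)) = j by omega,
    show j + 2 - 2 = j by omega,
    show 2 * (j + 2) + m + 1 - 2 * (j + 2) = m + 1 by omega,
    show 2 * (j + 2) + m - 2 * (j + 2) = m by omega]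
  have hcs : (2 * (j + 2) + m).choose ((j + 2) + (m + 1)) = (2 * (j + 2) + m).choose (j + 1) := by
    rw [← Nat.choose_symm (show j + 1 ≤ 2 * (j + 2) + m by omega)]
    congr 1
    omega
  have hkey : ((j + 2) + (m + 1)) * (2 * (j + 2) + m).choose ((j + 2) + (m + 1))
      = (j + 2) * (2 * (j + 2) + m).choose (j + 2) := by
    rw [hcs]
    have h := Nat.choose_succ_right_eq (2 * (j + 2) + m) (j + 1)
    rw [show 2 * (j + 2) + m - (j + 1) = (j + 2) + (m + 1) by omega] at h
    rw [Nat.mul_comm, show j + 1 + 1 = j + 2 from rfl] at h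
    rw [Nat.mul_comm, ← h, Nat.mul_comm]
  have hkX : ((j : Polynomial ℝ) + 2 + ((m : Polynomial ℝ) + 1)) *
        (((2 * (j + 2) + m).choose ((j + 2) + (m + 1)) : ℕ) : Polynomial ℝ)
      = ((j : Polynomial ℝ) + 2) *
        (((2 * (j + 2) + m).choose (j + 2) : ℕ) : Polynomial ℝ) := by
    exact_mod_cast hkey
  rw [A_add 0 (j + 2) (m + 1), A_add 1 j (m + 1), A_succ_left (1 + (j : ℝ)) m,
    A_succ_right (0 + ((j + 2 : ℕ) : ℝ)) m]
  rw [show (0 + ((j + 2 : ℕ) : ℝ)) = (j : ℝ) + 2 by push_cast; ring,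
    show (1 + (j : ℝ) + 1) = (j : ℝ) + 2 by ring,
    show (((j + 2 : ℕ) : ℝ)) = (j : ℝ) + 2 by push_cast; ring]
  simp only [C_eq_natCast, map_add, map_one, map_zero, map_ofNat]
  push_cast
  linear_combination (A 0 (j + 2) * A 1 j * A ((j : ℝ) + 2) m *
    (X + (j : Polynomial ℝ) + 2 + (m : Polynomial ℝ))) * hkX

/-! ### Log-concavity consequences -/

section LC
variable {n : ℕ} {f : ℕ → ℝ}

lemma f_inner_pos (hpos : ∀ k, k ≤ n → 0 ≤ f k)
    (hslc : ∀ k, 1 ≤ k → k ≤ n - 1 → f (k - 1) * f (k + 1) < f k ^ 2)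
    {k : ℕ} (h1 : 1 ≤ k) (h2 : k + 1 ≤ n) : 0 < f k := by
  have h := hslc k h1 (by omega)
  have h0 : 0 ≤ f (k - 1) * f (k + 1) :=
    mul_nonneg (hpos _ (by omega)) (hpos _ h2)
  nlinarith [hpos k (by omega)]

lemma step_lt (hn : 2 ≤ n) (hpos : ∀ k, k ≤ n → 0 ≤ f k)
    (hslc : ∀ k, 1 ≤ k → k ≤ n - 1 → f (k - 1) * f (k + 1) < f k ^ 2) :
    ∀ d a, a + 2 + d ≤ n → f a * f (a + 2 + d) < f (a + 1) * f (a + 1 + d) := by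
  intro d
  induction d with
  | zero =>
      intro a ha
      have h := hslc (a + 1) (by omega) (by omega)
      rw [show a + 1 - 1 = a by omega] at h
      have e : a + 2 + 0 = a + 1 + 1 := by omega
      rw [e]
      rw [show a + 1 + 0 = a + 1 by omega]
      nlinarith [h]
  | succ d ih =>
      intro a ha
      rw [show a + 2 + (d + 1) = a + 3 + d by omega, show a + 1 + (d + 1) = a + 2 + d by omega]
      have hb1 : 0 < f (a + 2 + d) :=
        f_inner_pos hpos hslc (by omega) (by omega)
      have ha1 : 0 < f (a + 1) :=
        f_inner_pos hpos hslc (by omega) (by omega)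
      have hfa : 0 ≤ f a := hpos a (by omega)
      have hfb : 0 ≤ f (a + 3 + d) := hpos _ (by omega)
      rcases eq_or_lt_of_le (mul_nonneg hfa hfb) with hz | hp
      · rw [← hz]
        exact mul_pos ha1 hb1
      · have hfb' : 0 < f (a + 3 + d) := by
          rcases (hpos a (by omega)).lt_or_eq with h | h
          · rcases hfb.lt_or_eq with h' | h'
            · exact h'
            · exfalso; rw [← h'] at hp; simp at hp
          · exfalso; rw [← h] at hp; simp at hp
        have ihh := ih a (by omega)
        have hs := hslc (a + 2 + d) (by omega) (by omega)
        rw [show a + 2 + d - 1 = a + 1 + d by omega, show a + 2 + d + 1 = a + 3 + d by omega] at hs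
        have h1 := mul_lt_mul_of_pos_left hs ha1
        have h2 := mul_lt_mul_of_pos_right ihh hfb'
        have key : (f a * f (a + 3 + d)) * f (a + 2 + d)
            < (f (a + 1) * f (a + 2 + d)) * f (a + 2 + d) := by
          rw [show a + 2 + 0 = a + 2 by omega, show a + 1 + 0 = a + 1 by omega] at ihh
          nlinarith [h1, h2]
        exact lt_of_mul_lt_mul_right key hb1.le

lemma Dpos (hn : 2 ≤ n) (hpos : ∀ k, k ≤ n → 0 ≤ f k)
    (hslc : ∀ k, 1 ≤ k → k ≤ n - 1 → f (k - 1) * f (k + 1) < f k ^ 2)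
    {k : ℕ} (h1 : 1 ≤ k) (h2 : 2 * k ≤ n) :
    f (k - 1) * f (n - k + 1) < f k * f (n - k) := by
  have h := step_lt hn hpos hslc (n - 2 * k) (k - 1) (by omega)
  rw [show k - 1 + 2 + (n - 2 * k) = n - k + 1 by omega,
    show k - 1 + 1 + (n - 2 * k) = n - k by omega, show k - 1 + 1 = k by omega] at h
  exact h

end LC

/-! ### Summation machinery -/

lemma abel_sum (g : ℕ → ℝ) (Tf : ℕ → Polynomial ℝ) (m : ℕ) :
    ∑ k ∈ Finset.range (m + 1), C (g k) * (Tf k - Tf (k + 1)) =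
      ∑ k ∈ Finset.range (m + 1), (C (g k) - C (g (k - 1))) * Tf k
        + (C (g 0) * Tf 0 - C (g m) * Tf (m + 1)) := by
  induction m with
  | zero => simp [mul_sub]
  | succ m ih =>
      rw [Finset.sum_range_succ, ih]
      conv_rhs => rw [Finset.sum_range_succ]
      simp only [Nat.add_sub_cancel]
      ring

lemma Ppoly_step1 {n : ℕ} (hn : 2 ≤ n) (f : ℕ → ℝ) :
    Ppoly n f = ∑ k ∈ Finset.range (n + 1), C (f k * f (n - k)) * (Tp n k - Tp n (k + 1)) := by
  unfold Ppoly
  refine Finset.sum_congr rfl fun k hk => ?_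
  rw [← Rtel n hn k (by simp only [Finset.mem_range] at hk; omega)]
  simp only [A_zero_shift, A_one_shift, A_negone_shift]
  rw [C_mul]
  ring

lemma Ppoly_repr {n : ℕ} (hn : 2 ≤ n) (f : ℕ → ℝ) :
    Ppoly n f = C (1/2 : ℝ) * ∑ j ∈ Finset.range n,
      C (f (j+1) * f (n - (j+1)) - f j * f (n - j)) *
        (Tp n (j+1) - Tp n (n + 1 - (j+1))) := by
  have habel := abel_sum (fun k => f k * f (n - k)) (Tp n) n
  rw [Tp_zero, Tp_top (by omega)] at habel
  have hP : Ppoly n f = ∑ j ∈ Finset.range n,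
      (C (f (j+1) * f (n - (j+1))) - C (f j * f (n - j))) * Tp n (j+1) := by
    rw [Ppoly_step1 hn f, habel]
    simp only [mul_zero, zero_sub, sub_zero, neg_zero, add_zero]
    rw [Finset.sum_range_succ']
    simp only [Nat.add_sub_cancel, Nat.zero_sub, sub_self, zero_mul, add_zero, Tp_zero, mul_zero]
  have hrefl : ∑ j ∈ Finset.range n,
        (C (f (j+1) * f (n - (j+1))) - C (f j * f (n - j))) * Tp n (j+1)
      = ∑ j ∈ Finset.range n,
        -((C (f (j+1) * f (n - (j+1))) - C (f j * f (n - j))) * Tp n (n - j)) := by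
    conv_lhs => rw [← Finset.sum_range_reflect]
    refine Finset.sum_congr rfl fun j hj => ?_
    simp only [Finset.mem_range] at hj
    rw [show n - 1 - j + 1 = n - j by omega, show n - 1 - j = n - j - 1 by omega]
    rw [show n - (n - j) = j by omega, show n - (n - j - 1) = j + 1 by omega,
      show n - (j + 1) = n - j - 1 by omega]
    simp only [C_mul]
    ring
  have hsplit : ∑ j ∈ Finset.range n,
      C (f (j+1) * f (n - (j+1)) - f j * f (n - j)) * (Tp n (j+1) - Tp n (n + 1 - (j+1)))
      = (∑ j ∈ Finset.range n,
          (C (f (j+1) * f (n - (j+1))) - C (f j * f (n - j))) * Tp n (j+1))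
        - ∑ j ∈ Finset.range n,
          (C (f (j+1) * f (n - (j+1))) - C (f j * f (n - j))) * Tp n (n - j) := by
    rw [← Finset.sum_sub_distrib]
    refine Finset.sum_congr rfl fun j hj => ?_
    simp only [Finset.mem_range] at hj
    rw [show n + 1 - (j + 1) = n - j by omega, map_sub]
    ring
  have hneg : ∑ j ∈ Finset.range n,
      (C (f (j+1) * f (n - (j+1))) - C (f j * f (n - j))) * Tp n (n - j)
      = -∑ j ∈ Finset.range n,
        (C (f (j+1) * f (n - (j+1))) - C (f j * f (n - j))) * Tp n (j+1) := by
    rw [hrefl, Finset.sum_neg_distrib, neg_neg]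
  rw [hsplit, hneg, sub_neg_eq_add, hP]
  have h2 : C ((1:ℝ)/2) * ((2:Polynomial ℝ) * (∑ j ∈ Finset.range n,
      (C (f (j+1) * f (n - (j+1))) - C (f j * f (n - j))) * Tp n (j+1)))
      = ∑ j ∈ Finset.range n,
      (C (f (j+1) * f (n - (j+1))) - C (f j * f (n - j))) * Tp n (j+1) := by
    rw [show ((2:Polynomial ℝ)) = C (2:ℝ) from (map_ofNat C 2).symm, ← mul_assoc, ← C_mul]
    norm_num
  rw [two_mul] at h2
  exact h2.symm

theorem P_degree_and_positive_coefficients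
    (n : ℕ) (hn : 2 ≤ n) (f : ℕ → ℝ)
    (hpos : ∀ k, k ≤ n → 0 ≤ f k)
    (hslc : ∀ k, 1 ≤ k → k ≤ n - 1 → f (k - 1) * f (k + 1) < f k ^ 2) :
    (Ppoly n f).degree = (n - 2 : ℕ) ∧ ∀ j, j ≤ n - 2 → 0 < (Ppoly n f).coeff j := by
  set D : ℕ → ℝ := fun k => f k * f (n - k) - f (k - 1) * f (n - k + 1) with hDdef
  have hrepr : Ppoly n f = C (1/2 : ℝ) * ∑ j ∈ Finset.range n,
      C (D (j+1)) * (Tp n (j+1) - Tp n (n + 1 - (j+1))) := by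
    rw [Ppoly_repr hn f]
    congr 1
    refine Finset.sum_congr rfl fun j hj => ?_
    simp only [Finset.mem_range] at hj
    have he : f (j+1) * f (n - (j+1)) - f j * f (n - j) = D (j+1) := by
      simp only [hDdef]
      rw [show j + 1 - 1 = j from rfl, show n - (j+1) + 1 = n - j by omega]
    rw [he]
  have hDpos : ∀ k, 1 ≤ k → 2 * k ≤ n → 0 < D k := by
    intro k h1 h2
    have := Dpos hn hpos hslc h1 h2
    simp only [hDdef]
    linarith
  have hDneg : ∀ k, 1 ≤ k → k ≤ n → D k = -(D (n + 1 - k)) := by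
    intro k h1 h2
    simp only [hDdef]
    rw [show n - (n + 1 - k) + 1 = k by omega, show n - (n + 1 - k) = k - 1 by omega,
      show n + 1 - k - 1 = n - k by omega, show n - k + 1 = n + 1 - k by omega]
    ring
  have hgood : ∀ k, 1 ≤ k → 2 * k ≤ n →
      (∀ i, 0 ≤ (Tp n k - Tp n (n + 1 - k)).coeff i) ∧
        (Tp n k - Tp n (n + 1 - k)).degree ≤ ((n - 2 : ℕ) : WithBot ℕ) := by
    intro k h1 h2
    rcases eq_or_ne k 1 with rfl | hk1
    · rw [show n + 1 - 1 = n by omega, U_one hn]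
      constructor
      · intro i
        rw [coeff_C_mul]
        exact mul_nonneg (by positivity) (A_coeff_nonneg (by norm_num) _ i)
      · refine (degree_mul_le _ _).trans ?_
        calc degree (C (((n * (n-1) : ℕ)):ℝ)) + (A 1 (n-2)).degree
            ≤ 0 + ((n-2:ℕ) : WithBot ℕ) := add_le_add degree_C_le (A_degree_le _ _)
          _ = _ := zero_add _
    · have hk2 : 2 ≤ k := by omega
      rw [U_gen hk2 h2]
      constructor
      · intro i
        rw [coeff_C_mul]
        refine mul_nonneg (by positivity) ?_
        exact coeff_mul_nonneg (A_coeff_nonneg le_rfl _)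
          (coeff_mul_nonneg (A_coeff_nonneg (by norm_num) _)
            (A_coeff_nonneg (by positivity) _)) i
      · refine (degree_mul_le _ _).trans ?_
        have hA : (A 0 k * (A 1 (k-2) * A k (n - 2*k))).degree
            ≤ ((k : ℕ) : WithBot ℕ) + (((k-2:ℕ) : WithBot ℕ) + ((n-2*k : ℕ) : WithBot ℕ)) := by
          refine (degree_mul_le _ _).trans (add_le_add (A_degree_le _ _) ?_)
          exact (degree_mul_le _ _).trans (add_le_add (A_degree_le _ _) (A_degree_le _ _))
        refine (add_le_add degree_C_le hA).trans ?_
        rw [zero_add]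
        refine le_of_eq ?_
        rw [← Nat.cast_add, ← Nat.cast_add, show k + ((k-2) + (n-2*k)) = n - 2 by omega]
  have hterm : ∀ j ∈ Finset.range n,
      (∀ i, 0 ≤ (C (D (j+1)) * (Tp n (j+1) - Tp n (n + 1 - (j+1)))).coeff i) ∧
        (C (D (j+1)) * (Tp n (j+1) - Tp n (n+1-(j+1)))).degree ≤ ((n-2:ℕ) : WithBot ℕ) := by
    intro j hj
    simp only [Finset.mem_range] at hj
    have hk1 : 1 ≤ j + 1 := by omega
    have hkn : j + 1 ≤ n := by omega
    rcases lt_trichotomy (2*(j+1)) (n+1) with h | h | h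
    · have h2 : 2*(j+1) ≤ n := by omega
      obtain ⟨hc, hd⟩ := hgood (j+1) hk1 h2
      constructor
      · intro i; rw [coeff_C_mul]; exact mul_nonneg (hDpos (j+1) hk1 h2).le (hc i)
      · exact (degree_mul_le _ _).trans (by simpa using add_le_add degree_C_le hd)
    · constructor
      · intro i; rw [U_mid h]; simp
      · rw [U_mid h]; simp
    · have hk' : 1 ≤ n + 1 - (j+1) := by omega
      have h2' : 2 * (n + 1 - (j+1)) ≤ n := by omega
      have hUeq : Tp n (j+1) - Tp n (n + 1 - (j+1))
          = -(Tp n (n + 1 - (j+1)) - Tp n (n + 1 - (n + 1 - (j+1)))) := by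
        rw [show n + 1 - (n + 1 - (j+1)) = j+1 by omega]; ring
      have hDe := hDneg (j+1) hk1 hkn
      rw [hUeq, hDe, map_neg, neg_mul_neg]
      obtain ⟨hc, hd⟩ := hgood (n+1-(j+1)) hk' h2'
      constructor
      · intro i; rw [coeff_C_mul]; exact mul_nonneg (hDpos _ hk' h2').le (hc i)
      · exact (degree_mul_le _ _).trans (by simpa using add_le_add degree_C_le hd)
  have hcoeff : ∀ i, i ≤ n - 2 → 0 < (Ppoly n f).coeff i := by
    intro i hi
    rw [hrepr, coeff_C_mul, finset_sum_coeff]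
    have hs : ∀ j ∈ Finset.range n,
        0 ≤ (C (D (j+1)) * (Tp n (j+1) - Tp n (n+1-(j+1)))).coeff i :=
      fun j hj => (hterm j hj).1 i
    have h0mem : 0 ∈ Finset.range n := by simp; omega
    have ht0 : 0 < (C (D 1) * (Tp n 1 - Tp n (n+1-1))).coeff i := by
      rw [show n + 1 - 1 = n by omega, U_one hn, coeff_C_mul, coeff_C_mul]
      have hD1 : 0 < D 1 := hDpos 1 le_rfl (by omega)
      have hA : 0 < (A 1 (n-2)).coeff i := A_one_coeff_pos (n-2) i hi
      have hnn : (0:ℝ) < ((n * (n-1) : ℕ) : ℝ) := by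
        exact_mod_cast Nat.mul_pos (by omega) (by omega)
      positivity
    have hsum := Finset.single_le_sum hs h0mem
    have hpossum : 0 < ∑ j ∈ Finset.range n,
        (C (D (j+1)) * (Tp n (j+1) - Tp n (n+1-(j+1)))).coeff i :=
      lt_of_lt_of_le ht0 hsum
    linarith
  have hdegle : (Ppoly n f).degree ≤ ((n-2:ℕ) : WithBot ℕ) := by
    rw [hrepr]
    refine (degree_mul_le _ _).trans ?_
    have hsum : (∑ j ∈ Finset.range n, C (D (j+1)) * (Tp n (j+1) - Tp n (n+1-(j+1)))).degree
        ≤ ((n-2:ℕ) : WithBot ℕ) := by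
      refine (degree_sum_le (Finset.range n)
        (fun j => C (D (j+1)) * (Tp n (j+1) - Tp n (n+1-(j+1))))).trans ?_
      exact Finset.sup_le fun j hj => (hterm j hj).2
    simpa using add_le_add (degree_C_le (a := (1/2 : ℝ))) hsum
  exact ⟨le_antisymm hdegle (le_degree_of_ne_zero (ne_of_gt (hcoeff (n-2) le_rfl))), hcoeff⟩
end

section
/- For every integer n ≥ 2 and all real x, one has the polynomial identity 2(x)_n − (x+1)_n − (x−1)_n = −n(n−1)(x+1)_{n−2}; that is, Φ_0(x) = −n(n−1)(x+1)_{n−2}. -/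
/-- Rising factorial (Pochhammer symbol): `asc x k = x (x+1) ⋯ (x+k-1)`. -/
noncomputable def asc (x : ℝ) (k : ℕ) : ℝ := (ascPochhammer ℝ k).eval x

lemma asc_succ_left (x : ℝ) (k : ℕ) : asc x (k + 1) = x * asc (x + 1) k := by
  simp [asc, ascPochhammer_succ_left, Polynomial.eval_comp]

lemma asc_succ_right (x : ℝ) (k : ℕ) : asc x (k + 1) = asc x k * (x + k) := by
  simp [asc, ascPochhammer_succ_right]

theorem Phi_zero_identity (n : ℕ) (hn : 2 ≤ n) (x : ℝ) :
    2 * asc x n - asc (x + 1) n - asc (x - 1) n =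
      -(n * (n - 1) : ℝ) * asc (x + 1) (n - 2) := by
  obtain ⟨m, rfl⟩ : ∃ m, n = m + 2 := ⟨n - 2, by omega⟩
  have h1 : asc x (m + 2) = x * (asc (x + 1) m * (x + 1 + m)) := by
    rw [asc_succ_left, asc_succ_right]
  have h2 : asc (x + 1) (m + 2) = asc (x + 1) m * (x + 1 + m) * (x + 1 + (m + 1)) := by
    rw [show m + 2 = (m + 1) + 1 from rfl, asc_succ_right, asc_succ_right]
    push_cast
    ring
  have h3 : asc (x - 1) (m + 2) = (x - 1) * (x * asc (x + 1) m) := by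
    rw [asc_succ_left, asc_succ_left]
    ring_nf
  have h4 : m + 2 - 2 = m := by omega
  rw [h1, h2, h3, h4]
  push_cast
  ring
end

section
/- Let n ≥ 3. Then the constant terms of the polynomials Φ_k satisfy: Φ_0(0) = −n!, Φ_1(0) = (n−1)!, and Φ_k(0) = 0 for every integer k with 2 ≤ k ≤ n/2. Consequently the free term of P_n(x) (with real coefficients f_0,…,f_n) equals n!( f_1 f_{n−1} − f_0 f_n ). -/
open Polynomial

/-- `Φ_k(x) = 2(x)_k(x)_{n-k} - (x-1)_k(x+1)_{n-k} - (x-1)_{n-k}(x+1)_k` for `k < n/2`,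
and `Φ_{n/2}(x) = (x)_{n/2}² - (x-1)_{n/2}(x+1)_{n/2}` when `n` is even. -/
noncomputable def Phi (n k : ℕ) (x : ℝ) : ℝ :=
  if 2 * k = n then asc x k ^ 2 - asc (x - 1) k * asc (x + 1) k
  else 2 * asc x k * asc x (n - k) - asc (x - 1) k * asc (x + 1) (n - k)
    - asc (x - 1) (n - k) * asc (x + 1) k

lemma asc_zero {k : ℕ} (hk : k ≠ 0) : asc 0 k = 0 := by
  simp [asc, ascPochhammer_eval_zero, hk]

lemma asc_one (k : ℕ) : asc 1 k = k.factorial := by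
  induction k with
  | zero => simp [asc]
  | succ m ih =>
    simp only [asc, ascPochhammer_succ_right, eval_mul, eval_add, eval_X, eval_natCast] at *
    rw [ih]
    push_cast [Nat.factorial_succ]
    ring

lemma asc_neg_one {k : ℕ} (hk : 2 ≤ k) : asc (-1) k = 0 := by
  obtain ⟨m, rfl⟩ : ∃ m, k = m + 1 := ⟨k - 1, by omega⟩
  have : (ascPochhammer ℝ m).eval 0 = 0 := by
    rw [ascPochhammer_eval_zero]; simp; omega
  simp [asc, ascPochhammer_succ_left, eval_comp, this]

theorem Phi_constant_terms_and_free_term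
    (n : ℕ) (hn : 3 ≤ n) (f : ℕ → ℝ) :
    Phi n 0 0 = -(n.factorial : ℝ) ∧
    Phi n 1 0 = ((n - 1).factorial : ℝ) ∧
    (∀ k, 2 ≤ k → 2 * k ≤ n → Phi n k 0 = 0) ∧
    (Ppoly n f).coeff 0 = (n.factorial : ℝ) * (f 1 * f (n - 1) - f 0 * f n) := by
  have h00 : asc 0 0 = 1 := by simp [asc]
  have hn0 : asc (-1) 0 = 1 := by simp [asc]
  have hneg1 : asc (-1) 1 = -1 := by simp [asc]
  refine ⟨?_, ?_, ?_, ?_⟩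
  · rw [Phi, if_neg (by omega)]
    norm_num
    rw [h00, hn0, asc_zero (k := n) (by omega), asc_neg_one (k := n) (by omega), asc_one]
    ring
  · rw [Phi, if_neg (by omega)]
    norm_num
    rw [asc_zero (by omega : (1:ℕ) ≠ 0), hneg1, asc_one,
      asc_neg_one (by omega : 2 ≤ n - 1), asc_zero (by omega : n - 1 ≠ 0)]
    ring
  · intro k hk2 hkn
    by_cases h : 2 * k = n
    · rw [Phi, if_pos h]
      norm_num
      rw [asc_zero (k := k) (by omega), asc_neg_one hk2]
      ring
    · rw [Phi, if_neg h]
      norm_num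
      rw [asc_zero (by omega : k ≠ 0), asc_zero (by omega : n - k ≠ 0),
        asc_neg_one hk2, asc_neg_one (by omega : 2 ≤ n - k)]
      ring
  · rw [coeff_zero_eq_eval_zero, Ppoly, eval_finset_sum]
    have hterm : ∀ k ∈ Finset.range (n + 1),
        (C (f k * f (n - k) * (n.choose k : ℝ)) *
          (ascPochhammer ℝ k * ascPochhammer ℝ (n - k) -
            (ascPochhammer ℝ k).comp (X + 1) *
            (ascPochhammer ℝ (n - k)).comp (X - 1))).eval 0
        = f k * f (n - k) * (n.choose k : ℝ) *
            (asc 0 k * asc 0 (n - k) - asc 1 k * asc (-1) (n - k)) := by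
      intro k _
      simp [asc, eval_comp]
    rw [Finset.sum_congr rfl hterm]
    obtain ⟨m, rfl⟩ : ∃ m, n = m + 3 := ⟨n - 3, by omega⟩
    rw [show m + 3 + 1 = (m + 2) + 1 + 1 by rfl, Finset.sum_range_succ,
      Finset.sum_range_succ]
    have hz : ∀ k ∈ Finset.range (m + 2),
        f k * f (m + 3 - k) * ((m + 3).choose k : ℝ) *
          (asc 0 k * asc 0 (m + 3 - k) - asc 1 k * asc (-1) (m + 3 - k)) = 0 := by
      intro k hk
      rw [Finset.mem_range] at hk
      rw [asc_neg_one (k := m + 3 - k) (by omega)]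
      rcases Nat.eq_zero_or_pos k with h | h
      · subst h; rw [asc_zero (k := m + 3 - 0) (by omega)]; ring
      · rw [asc_zero (by omega : k ≠ 0)]; ring
    rw [Finset.sum_eq_zero hz]
    have e1 : m + 3 - (m + 2) = 1 := by omega
    have e2 : m + 3 - (m + 3) = 0 := by omega
    rw [e1, e2, h00, hn0, hneg1, asc_one, asc_one,
      asc_zero (by omega : m + 2 ≠ 0), asc_zero (by omega : m + 3 ≠ 0)]
    have hc : ((m + 3).choose (m + 2) : ℝ) = (m + 3 : ℕ) := by
      rw [show m + 3 = (m + 2) + 1 by rfl, Nat.choose_succ_self_right]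
    rw [hc, Nat.choose_self]
    have : ((m + 3).factorial : ℝ) = ((m + 3 : ℕ) : ℝ) * ((m + 2).factorial : ℝ) := by
      rw [show m + 3 = (m + 2) + 1 by rfl, Nat.factorial_succ]; push_cast; ring
    rw [this]
    push_cast
    ring
end
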